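/- For every integer ℓ ≥ 1 and every m = (m₁,…,m_ℓ) ∈ ℕ^ℓ, the Lebesgue integral over the standard ℓ-simplex Ω := {t = (t₁,…,t_ℓ) ∈ ℝ^ℓ : t_i ≥ 0 for all i, and Σ_{i=1}^{ℓ} t_i ≤ 1} of the function t ↦ ∏_{k=1}^{ℓ} (Σ_{i=1}^{k} t_i)^{m_k} equals ∏_{k=1}^{ℓ} (k + Σ_{i=1}^{k} m_i)^{−1}. -/

import Mathlib

open MeasureTheory

namespace SimplexAux

open Finset

/-- Partial sum `t 0 + ⋯ + t k`. -/
noncomputable def psum {n : ℕ} (t : Fin n → ℝ) (k : Fin n) : ℝ :=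
  ∑ i ∈ Finset.univ.filter (fun i : Fin n => i ≤ k), t i

/-- The monomial `∏ k, (t 0 + ⋯ + t k) ^ m k`. -/
noncomputable def F {n : ℕ} (m : Fin n → ℕ) (t : Fin n → ℝ) : ℝ :=
  ∏ k, psum t k ^ m k

/-- The standard simplex. -/
def Ω (n : ℕ) : Set (Fin n → ℝ) := {t | (∀ i, 0 ≤ t i) ∧ ∑ i, t i ≤ 1}

lemma continuous_psum {n : ℕ} (k : Fin n) : Continuous (fun t => psum t k) := by
  unfold psum
  exact continuous_finset_sum _ fun i _ => continuous_apply i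

lemma continuous_F {n : ℕ} (m : Fin n → ℕ) : Continuous (F m) := by
  unfold F
  exact continuous_finset_prod _ fun k _ => (continuous_psum k).pow (m k)

lemma isClosed_Ω (n : ℕ) : IsClosed (Ω n) := by
  have h1 : IsClosed {t : Fin n → ℝ | ∀ i, 0 ≤ t i} := by
    have : {t : Fin n → ℝ | ∀ i, 0 ≤ t i} = ⋂ i, {t | 0 ≤ t i} := by
      ext t; simp [Set.mem_iInter]
    rw [this]
    exact isClosed_iInter fun i => isClosed_le continuous_const (continuous_apply i)
  have h2 : IsClosed {t : Fin n → ℝ | ∑ i, t i ≤ 1} :=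
    isClosed_le (continuous_finset_sum _ fun i _ => continuous_apply i) continuous_const
  exact h1.inter h2

lemma isCompact_Ω (n : ℕ) : IsCompact (Ω n) := by
  refine IsCompact.of_isClosed_subset (isCompact_Icc (a := (0 : Fin n → ℝ)) (b := 1))
    (isClosed_Ω n) ?_
  rintro t ⟨h0, h1⟩
  refine ⟨by exact h0, fun i => ?_⟩
  calc t i ≤ ∑ j, t j := Finset.single_le_sum (fun j _ => h0 j) (mem_univ i)
    _ ≤ 1 := h1

lemma measurableSet_Ω (n : ℕ) : MeasurableSet (Ω n) := (isClosed_Ω n).measurableSet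

lemma integrableOn_Ω {n : ℕ} (f : (Fin n → ℝ) → ℝ) (hf : Continuous f) :
    IntegrableOn f (Ω n) volume :=
  hf.continuousOn.integrableOn_compact (isCompact_Ω n)

lemma filter_le_castSucc {n : ℕ} (k : Fin n) :
    (Finset.univ.filter (fun i : Fin (n+1) => i ≤ Fin.castSucc k))
      = (Finset.univ.filter (fun i : Fin n => i ≤ k)).map Fin.castSuccEmb := by
  ext i
  simp only [mem_filter, mem_univ, true_and, mem_map, Fin.castSuccEmb]
  constructor
  · intro hi
    have hv : (i : ℕ) ≤ (k : ℕ) := hi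
    refine ⟨⟨i, lt_of_le_of_lt hv k.isLt⟩, hv, ?_⟩
    ext; rfl
  · rintro ⟨j, hj, rfl⟩
    exact hj

lemma sum_filter_le_castSucc {n : ℕ} (k : Fin n) (f : Fin (n+1) → ℝ) :
    ∑ i ∈ Finset.univ.filter (fun i : Fin (n+1) => i ≤ Fin.castSucc k), f i
      = ∑ i ∈ Finset.univ.filter (fun i : Fin n => i ≤ k), f (Fin.castSucc i) := by
  rw [filter_le_castSucc, Finset.sum_map]
  rfl

lemma filter_le_last (n : ℕ) :
    (Finset.univ.filter (fun i : Fin (n+1) => i ≤ Fin.last n)) = Finset.univ := by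
  simp [Fin.le_last]

lemma psum_snoc {n : ℕ} (t' : Fin n → ℝ) (y : ℝ) (k : Fin n) :
    psum (Fin.snoc t' y) (Fin.castSucc k) = psum t' k := by
  unfold psum
  rw [sum_filter_le_castSucc]
  exact Finset.sum_congr rfl fun i _ => Fin.snoc_castSucc _ _ _

lemma sum_snoc {n : ℕ} (t' : Fin n → ℝ) (y : ℝ) :
    ∑ i, (Fin.snoc t' y : Fin (n+1) → ℝ) i = (∑ i, t' i) + y := by
  rw [Fin.sum_univ_castSucc]
  simp

lemma psum_snoc_last {n : ℕ} (t' : Fin n → ℝ) (y : ℝ) :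
    psum (Fin.snoc t' y) (Fin.last n) = (∑ i, t' i) + y := by
  unfold psum
  rw [filter_le_last]
  exact sum_snoc t' y

lemma F_snoc {n : ℕ} (m : Fin (n+1) → ℕ) (t' : Fin n → ℝ) (y : ℝ) :
    F m (Fin.snoc t' y)
      = F (m ∘ Fin.castSucc) t' * ((∑ i, t' i) + y) ^ m (Fin.last n) := by
  unfold F
  rw [Fin.prod_univ_castSucc]
  simp [psum_snoc, psum_snoc_last, Function.comp]

lemma psum_last {n : ℕ} (t : Fin (n+1) → ℝ) :
    psum t (Fin.last n) = ∑ i, t i := by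
  unfold psum; rw [filter_le_last]

lemma F_bump {n : ℕ} (m : Fin (n+1) → ℕ) (E : ℕ) (t : Fin (n+1) → ℝ) :
    F (fun k => m k + if k = Fin.last n then E else 0) t
      = F m t * (∑ i, t i) ^ E := by
  unfold F
  rw [← psum_last]
  simp only [pow_add, Finset.prod_mul_distrib]
  congr 1
  have : ∀ k : Fin (n+1), psum t k ^ (if k = Fin.last n then E else 0)
      = if k = Fin.last n then psum t k ^ E else 1 := by
    intro k; split <;> simp
  simp only [this]
  rw [Finset.prod_ite_eq' Finset.univ (Fin.last n) (fun k => psum t k ^ E)]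
  simp

lemma inner_integral (p : ℕ) {S : ℝ} (hS0 : 0 ≤ S) (hS1 : S ≤ 1) :
    ∫ y in Set.Icc 0 (1 - S), (S + y) ^ p = (1 - S ^ (p+1)) / (p+1) := by
  rw [MeasureTheory.integral_Icc_eq_integral_Ioc,
    ← intervalIntegral.integral_of_le (by linarith : (0:ℝ) ≤ 1 - S)]
  rw [intervalIntegral.integral_comp_add_left (a := (0:ℝ)) (b := 1 - S) (fun u => u ^ p) S,
    show S + 0 = S from by ring, show S + (1 - S) = 1 from by ring, integral_pow]
  rw [one_pow]

lemma snoc_mem_Ω_iff {n : ℕ} (t' : Fin n → ℝ) (y : ℝ) :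
    (Fin.snoc t' y : Fin (n+1) → ℝ) ∈ Ω (n+1)
      ↔ (∀ i, 0 ≤ t' i) ∧ 0 ≤ y ∧ (∑ i, t' i) + y ≤ 1 := by
  constructor
  · rintro ⟨h0, h1⟩
    refine ⟨fun i => ?_, ?_, ?_⟩
    · have := h0 (Fin.castSucc i); rwa [Fin.snoc_castSucc] at this
    · have := h0 (Fin.last n); rwa [Fin.snoc_last] at this
    · rwa [sum_snoc] at h1
  · rintro ⟨h0, hy, hsum⟩
    refine ⟨fun i => ?_, ?_⟩
    · exact Fin.lastCases (by rwa [Fin.snoc_last])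
        (fun j => by rw [Fin.snoc_castSucc]; exact h0 j) i
    · rwa [sum_snoc]

lemma step (n : ℕ) (m : Fin (n+1) → ℕ) :
    ∫ t in Ω (n+1), F m t
      = ((m (Fin.last n) : ℝ) + 1)⁻¹ *
        ((∫ t' in Ω n, F (m ∘ Fin.castSucc) t')
          - ∫ t' in Ω n, F (m ∘ Fin.castSucc) t' * (∑ i, t' i) ^ (m (Fin.last n) + 1)) := by
  set mℓ := m (Fin.last n) with hmℓ
  set m' : Fin n → ℕ := m ∘ Fin.castSucc with hm'
  set g : (Fin (n+1) → ℝ) → ℝ := (Ω (n+1)).indicator (F m) with hg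
  have hgint : Integrable g := by
    rw [hg, integrable_indicator_iff (measurableSet_Ω _)]
    exact integrableOn_Ω _ (continuous_F m)
  set e : ((Fin (n+1)) → ℝ) ≃ᵐ ℝ × (Fin n → ℝ) :=
    MeasurableEquiv.piFinSuccAbove (fun _ => ℝ) (Fin.last n) with he
  have hmp : MeasurePreserving e volume volume :=
    volume_preserving_piFinSuccAbove (fun _ => ℝ) (Fin.last n)
  have hesymm : ∀ (y : ℝ) (t' : Fin n → ℝ), e.symm (y, t') = Fin.snoc t' y := by
    intro y t'
    simp [he, MeasurableEquiv.piFinSuccAbove, Fin.insertNth_last', Fin.snocEquiv]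
  have hgint2 : Integrable (fun p : ℝ × (Fin n → ℝ) => g (e.symm p))
      (volume.prod volume) := by
    rw [← Measure.volume_eq_prod]
    exact ((hmp.symm e).integrable_comp_emb (MeasurableEquiv.measurableEmbedding _)).mpr hgint
  have h4 : ∀ t' : Fin n → ℝ, (∫ y, g (Fin.snoc t' y))
      = (Ω n).indicator
          (fun t' => F m' t' * ((1 - (∑ i, t' i) ^ (mℓ+1)) / (mℓ+1))) t' := by
    intro t'
    by_cases ht' : t' ∈ Ω n
    · obtain ⟨h0, hS1⟩ := ht'
      have hS0 : (0:ℝ) ≤ ∑ i, t' i := Finset.sum_nonneg fun i _ => h0 i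
      have hpt : ∀ y, g (Fin.snoc t' y)
          = F m' t' * (Set.Icc (0:ℝ) (1 - ∑ i, t' i)).indicator
              (fun y => ((∑ i, t' i) + y) ^ mℓ) y := by
        intro y
        by_cases hy : y ∈ Set.Icc (0:ℝ) (1 - ∑ i, t' i)
        · have hmem : (Fin.snoc t' y : Fin (n+1) → ℝ) ∈ Ω (n+1) :=
            (snoc_mem_Ω_iff t' y).mpr ⟨h0, hy.1, by have := hy.2; linarith⟩
          rw [hg, Set.indicator_of_mem hmem, Set.indicator_of_mem hy, F_snoc, ← hm', ← hmℓ]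
        · have hnm : (Fin.snoc t' y : Fin (n+1) → ℝ) ∉ Ω (n+1) := by
            intro hmem
            rcases (snoc_mem_Ω_iff t' y).mp hmem with ⟨_, hy0, hsum⟩
            exact hy ⟨hy0, by linarith⟩
          rw [hg, Set.indicator_of_notMem hnm, Set.indicator_of_notMem hy, mul_zero]
      rw [Set.indicator_of_mem (show t' ∈ Ω n from ⟨h0, hS1⟩)]
      simp_rw [hpt]
      rw [MeasureTheory.integral_const_mul, MeasureTheory.integral_indicator measurableSet_Icc,
        inner_integral mℓ hS0 hS1]
    · rw [Set.indicator_of_notMem ht']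
      have hz : ∀ y, g (Fin.snoc t' y) = 0 := by
        intro y
        rw [hg]
        apply Set.indicator_of_notMem
        intro hmem
        rcases (snoc_mem_Ω_iff t' y).mp hmem with ⟨h0, hy0, hsum⟩
        exact ht' ⟨h0, by linarith⟩
      simp_rw [hz]
      simp
  have hint1 : IntegrableOn (F m') (Ω n) volume := integrableOn_Ω _ (continuous_F m')
  have hint2 : IntegrableOn (fun t' => F m' t' * (∑ i, t' i) ^ (mℓ+1)) (Ω n) volume :=
    integrableOn_Ω _ ((continuous_F m').mul
      ((continuous_finset_sum _ fun i _ => continuous_apply i).pow _))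
  calc ∫ t in Ω (n+1), F m t = ∫ t, g t := (integral_indicator (measurableSet_Ω _)).symm
    _ = ∫ p : ℝ × (Fin n → ℝ), g (e.symm p) := ((hmp.symm e).integral_comp' g).symm
    _ = ∫ t', ∫ y, g (e.symm (y, t')) := by
        rw [Measure.volume_eq_prod]
        exact integral_prod_symm _ hgint2
    _ = ∫ t', (Ω n).indicator
          (fun t' => F m' t' * ((1 - (∑ i, t' i) ^ (mℓ+1)) / (mℓ+1))) t' := by
        congr 1; funext t'
        simp_rw [hesymm]
        exact h4 t'
    _ = ∫ t' in Ω n, F m' t' * ((1 - (∑ i, t' i) ^ (mℓ+1)) / (mℓ+1)) :=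
        integral_indicator (measurableSet_Ω _)
    _ = ∫ t' in Ω n, ((mℓ:ℝ)+1)⁻¹ * (F m' t' - F m' t' * (∑ i, t' i) ^ (mℓ+1)) := by
        congr 1; funext t'
        field_simp
    _ = ((mℓ:ℝ)+1)⁻¹ * ((∫ t' in Ω n, F m' t')
          - ∫ t' in Ω n, F m' t' * (∑ i, t' i) ^ (mℓ+1)) := by
        rw [MeasureTheory.integral_const_mul, integral_sub hint1 hint2]

lemma main (n : ℕ) (m : Fin n → ℕ) :
    ∫ t in Ω n, F m t
      = ∏ k : Fin n, (((k:ℕ) + 1 : ℝ)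
          + ∑ i ∈ Finset.univ.filter (fun i : Fin n => i ≤ k), (m i : ℝ))⁻¹ := by
  induction n with
  | zero =>
    have hΩ : Ω 0 = Set.univ := by
      ext t
      simp [Ω]
    have hF : ∀ t, F m t = 1 := by intro t; simp [F]
    rw [hΩ]
    simp only [hF]
    rw [setIntegral_univ, integral_const]
    simp [volume_pi, measureReal_def]
  | succ n ih =>
    rw [step n m]
    rw [ih (m ∘ Fin.castSucc)]
    cases n with
    | zero =>
      have h2 : (∫ t' in Ω 0, F (m ∘ Fin.castSucc) t'
          * (∑ i, t' i) ^ (m (Fin.last 0) + 1)) = 0 := by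
        have hz : ∀ t' : Fin 0 → ℝ,
            F (m ∘ Fin.castSucc) t' * (∑ i, t' i) ^ (m (Fin.last 0) + 1) = 0 := by
          intro t'; simp
        simp only [hz]
        simp
      rw [h2]
      simp only [Finset.univ_eq_empty, Finset.prod_empty, sub_zero, mul_one]
      rw [Fin.prod_univ_one]
      have h1 : (Fin.last 0 : Fin 1) = 0 := rfl
      rw [h1]
      have h3 : (Finset.univ.filter (fun i : Fin 1 => i ≤ 0)) = {0} := by decide
      rw [h3, Finset.sum_singleton]
      norm_num [add_comm]
    | succ n₀ =>
      have hbump : ∀ t' : Fin (n₀+1) → ℝ,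
          F (m ∘ Fin.castSucc) t' * (∑ i, t' i) ^ (m (Fin.last (n₀+1)) + 1)
            = F (fun k => (m ∘ Fin.castSucc) k
                + if k = Fin.last n₀ then m (Fin.last (n₀+1)) + 1 else 0) t' :=
        fun t' => (F_bump _ _ t').symm
      simp only [hbump]
      rw [ih (fun k => (m ∘ Fin.castSucc) k
                + if k = Fin.last n₀ then m (Fin.last (n₀+1)) + 1 else 0)]
      simp only [Function.comp_apply]
      set M := m (Fin.last (n₀+1)) with hM
      set A : Fin (n₀+1) → ℝ := fun k =>
        ((k:ℕ):ℝ) + 1 + ∑ i ∈ Finset.univ.filter (fun i : Fin (n₀+1) => i ≤ k),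
          ((m (Fin.castSucc i) : ℕ) : ℝ) with hA
      have hC : ∀ k : Fin (n₀+1),
          (((k:ℕ):ℝ) + 1 + ∑ i ∈ Finset.univ.filter (fun i : Fin (n₀+1) => i ≤ k),
            ((m (Fin.castSucc i) + if i = Fin.last n₀ then M + 1 else 0 : ℕ) : ℝ))
            = A k + if k = Fin.last n₀ then (M:ℝ) + 1 else 0 := by
        intro k
        have hsum : ∑ i ∈ Finset.univ.filter (fun i : Fin (n₀+1) => i ≤ k),
            ((m (Fin.castSucc i) + if i = Fin.last n₀ then M + 1 else 0 : ℕ) : ℝ)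
            = (∑ i ∈ Finset.univ.filter (fun i : Fin (n₀+1) => i ≤ k),
                ((m (Fin.castSucc i) : ℕ) : ℝ))
              + ∑ i ∈ Finset.univ.filter (fun i : Fin (n₀+1) => i ≤ k),
                (if i = Fin.last n₀ then ((M:ℝ) + 1) else 0) := by
          rw [← Finset.sum_add_distrib]
          congr 1; funext i
          push_cast [apply_ite (Nat.cast : ℕ → ℝ)]
          ring
        rw [hsum, Finset.sum_ite_eq' (Finset.univ.filter (fun i : Fin (n₀+1) => i ≤ k))
          (Fin.last n₀) (fun _ => (M:ℝ) + 1)]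
        have hmem : (Fin.last n₀ ∈ Finset.univ.filter (fun i : Fin (n₀+1) => i ≤ k))
            ↔ k = Fin.last n₀ := by
          simp [Fin.last_le_iff]
        rw [if_congr hmem rfl rfl, hA]
        ring
      simp only [hC]
      have hBA : ∀ k : Fin (n₀+1),
          ((((Fin.castSucc k : Fin (n₀+2)) : ℕ) : ℝ) + 1
            + ∑ i ∈ Finset.univ.filter (fun i : Fin (n₀+2) => i ≤ Fin.castSucc k), (m i : ℝ))
            = A k := by
        intro k
        rw [sum_filter_le_castSucc k (fun i => (m i : ℝ)), hA, Fin.coe_castSucc]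
      have hBlast : ((((Fin.last (n₀+1) : Fin (n₀+2)) : ℕ) : ℝ) + 1
            + ∑ i ∈ Finset.univ.filter (fun i : Fin (n₀+2) => i ≤ Fin.last (n₀+1)), (m i : ℝ))
            = A (Fin.last n₀) + ((M:ℝ) + 1) := by
        have h1 : A (Fin.last n₀)
            = ((n₀:ℝ) + 1) + ∑ i : Fin (n₀+1), ((m (Fin.castSucc i) : ℕ) : ℝ) := by
          simp only [hA]
          rw [filter_le_last]
          simp [Fin.val_last]
        rw [filter_le_last, Fin.sum_univ_castSucc (f := fun i : Fin (n₀+2) => (m i : ℝ)), h1, hM]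
        simp [Fin.val_last]
        ring
      rw [Fin.prod_univ_castSucc
        (f := fun k : Fin (n₀+2) => ((((k : Fin (n₀+2)) : ℕ) : ℝ) + 1
          + ∑ i ∈ Finset.univ.filter (fun i : Fin (n₀+2) => i ≤ k), (m i : ℝ))⁻¹)]
      simp only [hBA, hBlast]
      rw [Fin.prod_univ_castSucc (f := fun k : Fin (n₀+1) =>
        (A k + if k = Fin.last n₀ then (M:ℝ) + 1 else 0)⁻¹)]
      rw [Fin.prod_univ_castSucc (f := fun k : Fin (n₀+1) => (A k)⁻¹)]
      simp only [(Fin.castSucc_lt_last _).ne, if_false, add_zero, eq_self_iff_true, if_true]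
      have ha : 0 < A (Fin.last n₀) := by
        rw [hA]
        have : (0:ℝ) ≤ ∑ i ∈ Finset.univ.filter
            (fun i : Fin (n₀+1) => i ≤ Fin.last n₀), ((m (Fin.castSucc i) : ℕ) : ℝ) :=
          Finset.sum_nonneg fun i _ => Nat.cast_nonneg _
        positivity
      have hM1 : (0:ℝ) < (M:ℝ) + 1 := by positivity
      set a := A (Fin.last n₀)
      set q := ∏ k : Fin n₀, (A (Fin.castSucc k))⁻¹
      field_simp
      ring

end SimplexAux

/-- For every `ℓ ≥ 1` and `m ∈ ℕ^ℓ`, the Lebesgue integral over the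
standard `ℓ`-simplex `Ω = {t ∈ ℝ^ℓ : t_i ≥ 0, Σ t_i ≤ 1}` of
`t ↦ ∏_{k=1}^{ℓ} (Σ_{i=1}^{k} t_i)^{m_k}` exists and equals
`∏_{k=1}^{ℓ} (k + Σ_{i=1}^{k} m_i)⁻¹`.
(The indices of `t` and `m` are shifted to start at `0`.) -/
theorem integral_simplex_monomial (ℓ : ℕ) (hℓ : 1 ≤ ℓ) (m : Fin ℓ → ℕ) :
    IntegrableOn
      (fun t : Fin ℓ → ℝ => ∏ k : Fin ℓ,
        (∑ i ∈ Finset.univ.filter (fun i : Fin ℓ => i ≤ k), t i) ^ m k)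
      {t : Fin ℓ → ℝ | (∀ i, 0 ≤ t i) ∧ ∑ i, t i ≤ 1} volume ∧
    (∫ t in {t : Fin ℓ → ℝ | (∀ i, 0 ≤ t i) ∧ ∑ i, t i ≤ 1},
        ∏ k : Fin ℓ, (∑ i ∈ Finset.univ.filter (fun i : Fin ℓ => i ≤ k), t i) ^ m k)
      = ∏ k : Fin ℓ,
          (((k : ℕ) + 1 : ℝ)
            + ∑ i ∈ Finset.univ.filter (fun i : Fin ℓ => i ≤ k), (m i : ℝ))⁻¹ := by
  constructor
  · exact SimplexAux.integrableOn_Ω (SimplexAux.F m) (SimplexAux.continuous_F m)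
  · exact SimplexAux.main ℓ m
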